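/- Let A and B be finite groups such that Nil_A(a) is a subgroup of A for every a ∈ A and Nil_B(b) is a subgroup of B for every b ∈ B. Then Nil_{A×B}(x) is a subgroup of A × B for every element x ∈ A × B; indeed Nil_{A×B}((a,b)) = Nil_A(a) × Nil_B(b). -/

import Mathlib

/-- The nilpotent neighborhood of `x`: elements `y` such that `⟨x,y⟩` is nilpotent. -/
def nilNbhd {G : Type*} [Group G] (x : G) : Set G :=
  {y | Group.IsNilpotent ↥(Subgroup.closure ({x, y} : Set G))}

/-- The hypercenter of a finite group: the stable term of the upper central series. -/
noncomputable def hypercenter (G : Type*) [Group G] : Subgroup G :=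
  Subgroup.upperCentralSeries G (Nat.card G)

instance hypercenter_normal (G : Type*) [Group G] : (hypercenter G).Normal :=
  inferInstanceAs (Subgroup.upperCentralSeries G (Nat.card G)).Normal

/-- The graph Γ(G): induced subgraph of the nilpotent graph on `G \ Z_∞(G)`. -/
def nilGraph (G : Type*) [Group G] : SimpleGraph {x : G // x ∉ hypercenter G} where
  Adj a b := a ≠ b ∧ Group.IsNilpotent ↥(Subgroup.closure ({a.1, b.1} : Set G))
  symm := ⟨fun a b ⟨h1, h2⟩ => ⟨h1.symm, by rwa [Set.pair_comm]⟩⟩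
  loopless := ⟨fun a h => h.1 rfl⟩

/-- The commuting graph on the non-central elements. -/
def commGraph (G : Type*) [Group G] : SimpleGraph {x : G // x ∉ Subgroup.center G} where
  Adj a b := a ≠ b ∧ a.1 * b.1 = b.1 * a.1
  symm := ⟨fun a b ⟨h1, h2⟩ => ⟨h1.symm, h2.symm⟩⟩
  loopless := ⟨fun a h => h.1 rfl⟩

/-- Diameter of a connected component: diameter of the induced subgraph on its support. -/
noncomputable def compDiam {V : Type*} (Γ : SimpleGraph V) (c : Γ.ConnectedComponent) : ℕ :=
  (Γ.induce c.supp).diam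

/-- `H` is a Frobenius complement in `G`. -/
def IsFrobeniusComplement {G : Type*} [Group G] (H : Subgroup G) : Prop :=
  H ≠ ⊥ ∧ H ≠ ⊤ ∧ ∀ g : G, g ∉ H → H ⊓ H.map (MulAut.conj g).toMonoidHom = ⊥

/-- `G` is a Frobenius group. -/
def IsFrobenius (G : Type*) [Group G] : Prop :=
  ∃ H : Subgroup G, IsFrobeniusComplement H

/-- `K` is the Frobenius kernel corresponding to the complement `H`. -/
def IsFrobeniusKernelOf {G : Type*} [Group G] (K H : Subgroup G) : Prop :=
  IsFrobeniusComplement H ∧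
    (K : Set G) = {1} ∪ {x : G | ∀ g : G, x ∉ H.map (MulAut.conj g).toMonoidHom}

/-- `K` is a Frobenius kernel of `G`. -/
def IsFrobeniusKernel {G : Type*} [Group G] (K : Subgroup G) : Prop :=
  ∃ H : Subgroup G, IsFrobeniusKernelOf K H

/-- `G` is a 2-Frobenius group. -/
def IsTwoFrobenius (G : Type*) [Group G] : Prop :=
  ∃ K L : Subgroup G, ∃ hK : K.Normal, L.Normal ∧ K ≤ L ∧
    IsFrobeniusKernel (K.subgroupOf L) ∧
    (haveI := hK; IsFrobeniusKernel (Subgroup.map (QuotientGroup.mk' K) L))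

/-- The Fitting subgroup: the largest normal nilpotent subgroup (of a finite group). -/
def fitting (G : Type*) [Group G] : Subgroup G :=
  sSup {H : Subgroup G | H.Normal ∧ Group.IsNilpotent ↥H}

lemma nil_pair_iff {A B : Type*} [Group A] [Group B] (a c : A) (b d : B) :
    Group.IsNilpotent ↥(Subgroup.closure ({(a,b), (c,d)} : Set (A × B))) ↔
      Group.IsNilpotent ↥(Subgroup.closure ({a, c} : Set A)) ∧
      Group.IsNilpotent ↥(Subgroup.closure ({b, d} : Set B)) := by
  constructor
  · intro h
    constructor
    · have hm : (Subgroup.closure ({(a,b),(c,d)} : Set (A × B))).map (MonoidHom.fst A B)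
          = Subgroup.closure ({a, c} : Set A) := by
        rw [MonoidHom.map_closure]
        congr 1
        simp [Set.image_pair]
      have := nilpotent_of_surjective (h := h)
        ((MonoidHom.fst A B).subgroupMap _) ((MonoidHom.fst A B).subgroupMap_surjective _)
      rwa [hm] at this
    · have hm : (Subgroup.closure ({(a,b),(c,d)} : Set (A × B))).map (MonoidHom.snd A B)
          = Subgroup.closure ({b, d} : Set B) := by
        rw [MonoidHom.map_closure]
        congr 1
        simp [Set.image_pair]
      have := nilpotent_of_surjective (h := h)
        ((MonoidHom.snd A B).subgroupMap _) ((MonoidHom.snd A B).subgroupMap_surjective _)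
      rwa [hm] at this
  · rintro ⟨h1, h2⟩
    have hle : Subgroup.closure ({(a,b),(c,d)} : Set (A × B)) ≤
        (Subgroup.closure ({a,c} : Set A)).prod (Subgroup.closure ({b,d} : Set B)) := by
      rw [Subgroup.closure_le]
      rintro x (rfl | rfl) <;>
        exact ⟨Subgroup.subset_closure (by simp), Subgroup.subset_closure (by simp)⟩
    haveI : Group.IsNilpotent
        ((Subgroup.closure ({a,c} : Set A)).prod (Subgroup.closure ({b,d} : Set B))) := by
      exact nilpotent_of_surjective (MulEquiv.toMonoidHom (Subgroup.prodEquiv _ _).symm)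
        (MulEquiv.surjective _)
    have := Subgroup.isNilpotent ((Subgroup.closure ({(a,b),(c,d)} : Set (A × B))).subgroupOf
      ((Subgroup.closure ({a,c} : Set A)).prod (Subgroup.closure ({b,d} : Set B))))
    exact nilpotent_of_surjective
      (MulEquiv.toMonoidHom (Subgroup.subgroupOfEquivOfLe hle)) (MulEquiv.surjective _)

/-- Nilpotent neighborhoods in a direct product. -/
theorem stmt_9 (A B : Type*) [Group A] [Group B] [Finite A] [Finite B]
    (hA : ∀ a : A, ∃ N : Subgroup A, (N : Set A) = nilNbhd a)
    (hB : ∀ b : B, ∃ N : Subgroup B, (N : Set B) = nilNbhd b) :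
    ∀ x : A × B, (∃ N : Subgroup (A × B), (N : Set (A × B)) = nilNbhd x) ∧
      nilNbhd x = nilNbhd x.1 ×ˢ nilNbhd x.2 := by
  rintro ⟨a, b⟩
  have heq : nilNbhd ((a, b) : A × B) = nilNbhd a ×ˢ nilNbhd b := by
    ext ⟨c, d⟩
    exact nil_pair_iff a c b d
  refine ⟨?_, heq⟩
  obtain ⟨NA, hNA⟩ := hA a
  obtain ⟨NB, hNB⟩ := hB b
  exact ⟨NA.prod NB, by rw [Subgroup.coe_prod, hNA, hNB, heq]⟩
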